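/- Let A be an n×n Hermitian matrix written in block form A = [[a₁₁, X*],[X, M₁]] with X ∈ ℂ^{n−1} and M₁ the lower-right (n−1)×(n−1) block. Suppose λ_i(A) is an eigenvalue of A with unit eigenvector v_i, and λ_i(A) is not an eigenvalue of M₁. Then |v_{i,1}|² = 1 / (1 + X* (λ_i(A)·I_{n−1} − M₁)^{−2} X). -/

import Mathlib

/-- Alternate expression for the first component of an eigenvector (Erdős-Schlein-Yau). -/
theorem eigenvector_component_alt_formula {n : ℕ}
    (A : Matrix (Fin (n+1)) (Fin (n+1)) ℂ) (hA : A.IsHermitian)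
    (lam : ℝ) (v : Fin (n+1) → ℂ)
    (heig : A.mulVec v = (lam : ℂ) • v)
    (hvu : dotProduct (star v) v = 1)
    (hM : IsUnit ((lam : ℂ) • (1 : Matrix (Fin n) (Fin n) ℂ)
        - A.submatrix Fin.succ Fin.succ).det) :
    (‖v 0‖ : ℂ) ^ 2
      = 1 / (1 + dotProduct (star fun k : Fin n => A k.succ 0)
          ((((lam : ℂ) • (1 : Matrix (Fin n) (Fin n) ℂ) - A.submatrix Fin.succ Fin.succ)⁻¹ *
            ((lam : ℂ) • (1 : Matrix (Fin n) (Fin n) ℂ) - A.submatrix Fin.succ Fin.succ)⁻¹).mulVec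
            (fun k : Fin n => A k.succ 0))) := by
  set M : Matrix (Fin n) (Fin n) ℂ := A.submatrix Fin.succ Fin.succ with hMdef
  set B : Matrix (Fin n) (Fin n) ℂ := (lam : ℂ) • (1 : Matrix (Fin n) (Fin n) ℂ) - M with hBdef
  set X : Fin n → ℂ := fun k => A k.succ 0 with hXdef
  set w : Fin n → ℂ := fun k => v k.succ with hwdef
  -- B is Hermitian
  have hMH : M.conjTranspose = M := by
    simp [hMdef, Matrix.conjTranspose_submatrix, hA.eq]
  have hBH : B.conjTranspose = B := by
    simp [hBdef, Matrix.conjTranspose_smul, hMH, Complex.star_def, Complex.conj_ofReal]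
  have hBinvH : B⁻¹.conjTranspose = B⁻¹ := by
    rw [Matrix.conjTranspose_nonsing_inv, hBH]
  -- B w = v 0 • X
  have hBw : B.mulVec w = v 0 • X := by
    funext k
    have h1 := congrFun heig k.succ
    simp only [Matrix.mulVec, dotProduct, Pi.smul_apply, smul_eq_mul] at h1 ⊢
    rw [Fin.sum_univ_succ] at h1
    simp only [hBdef, hMdef, Matrix.sub_apply, Matrix.smul_apply, Matrix.one_apply,
      Matrix.submatrix_apply, smul_eq_mul, sub_mul, Finset.sum_sub_distrib]
    have : (∑ j : Fin n, ((lam : ℂ) * if k = j then 1 else 0) * w j)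
        = (lam : ℂ) * v k.succ := by
      simp [hwdef, mul_ite, Finset.sum_ite_eq, mul_assoc]
    rw [this]
    have h2 : ∑ j : Fin n, A k.succ j.succ * w j = (lam : ℂ) * v k.succ - A k.succ 0 * v 0 := by
      rw [hwdef]; linear_combination h1
    rw [h2]
    ring
  -- w = v 0 • B⁻¹ X
  have hBinvB : B⁻¹ * B = 1 := Matrix.nonsing_inv_mul B hM
  have hw : w = v 0 • B⁻¹.mulVec X := by
    have := congrArg (B⁻¹.mulVec) hBw
    rw [Matrix.mulVec_mulVec, hBinvB, Matrix.one_mulVec, Matrix.mulVec_smul] at this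
    exact this
  -- decompose the unit norm condition
  set S : ℂ := dotProduct (star X) ((B⁻¹ * B⁻¹).mulVec X) with hSdef
  have hnorm : star (v 0) * v 0 + dotProduct (star w) w = 1 := by
    rw [← hvu]
    simp only [dotProduct, Pi.star_apply]
    rw [Fin.sum_univ_succ]

  have hww : dotProduct (star w) w = star (v 0) * v 0 * S := by
    rw [hw, star_smul, smul_dotProduct, dotProduct_smul,
      Matrix.star_mulVec, hBinvH, ← Matrix.dotProduct_mulVec, Matrix.mulVec_mulVec, hSdef]
    simp only [smul_eq_mul]
    ring
  have key : star (v 0) * v 0 * (1 + S) = 1 := by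
    rw [mul_add, mul_one, ← hww, hnorm]
  have hS0 : (1 + S) ≠ 0 := by
    intro h; rw [h, mul_zero] at key; exact one_ne_zero key.symm
  have hsq : (‖v 0‖ : ℂ) ^ 2 = star (v 0) * v 0 := by
    rw [Complex.star_def, Complex.normSq_eq_conj_mul_self.symm]
    rw [← Complex.sq_norm]
    push_cast [Complex.norm_def]
    norm_cast
  rw [hsq, eq_div_iff hS0, key]
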